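/- Let p be a prime, m a positive integer, F a finite field with p^m elements, and ω a generator of F^×. Let d, e, s be integers with d ≥ 2, d ∣ p^m − 1, s ≥ 1, s ∣ m, 0 ≤ e ≤ d − 1, and d ∣ e·(p^m−1)/(p^s−1). Let A be the subgroup of the permutation group of F generated by the maps x ↦ ω^e·x^{p^s} and x ↦ ω^d·x. Then A acts transitively on F \ {0} if and only if the following all hold: e > 0, gcd(d, e) = 1, every prime divisor of d divides p^s − 1, and if 4 ∣ d then 4 ∣ p^s − 1. -/

import Mathlib

open Finset

private lemma sum_geom_add {R : Type*} [CommSemiring R] (q : R) (a b : ℕ) :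
    ∑ i ∈ range (a + b), q ^ i
      = (∑ i ∈ range a, q ^ i) + q ^ a * ∑ i ∈ range b, q ^ i := by
  induction b with
  | zero => simp
  | succ b ih =>
      rw [← add_assoc, sum_range_succ, sum_range_succ, ih]
      ring_nf

open Finset in
private lemma sum_geom_mul (q : ℤ) (r l : ℕ) :
    ∑ i ∈ range (r * l), q ^ i
      = (∑ i ∈ range l, (q ^ r) ^ i) * ∑ i ∈ range r, q ^ i := by
  induction l with
  | zero => simp
  | succ l ih =>
      rw [Nat.mul_succ, sum_geom_add, ih, sum_range_succ]
      ring_nf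

open Finset in
private lemma sub_one_dvd_geom_sub (q : ℤ) (l : ℕ) :
    (q - 1) ∣ (∑ i ∈ range l, q ^ i) - l := by
  induction l with
  | zero => simp
  | succ l ih =>
      rw [sum_range_succ]
      push_cast
      have h : q ^ l - 1 = (∑ i ∈ range l, q ^ i) * (q - 1) := (geom_sum_mul q l).symm
      have : (∑ i ∈ range (l) , q ^ i) + q ^ l - (l + 1)
          = ((∑ i ∈ range l, q ^ i) - l) + (q ^ l - 1) := by ring
      rw [this, h]
      exact dvd_add ih (Dvd.intro_left _ rfl)

open Finset in
private lemma binom_pow_sub (q : ℤ) (i : ℕ) :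
    (q - 1) ^ 2 ∣ q ^ i - (1 + i * (q - 1)) := by
  induction i with
  | zero => simp
  | succ i ih =>
      have : q ^ (i + 1) - (1 + (i + 1 : ℕ) * (q - 1))
          = q * (q ^ i - (1 + i * (q - 1))) + (i : ℤ) * (q - 1) ^ 2 := by
        push_cast; ring
      rw [this]
      exact dvd_add (Dvd.dvd.mul_left ih q) ⟨(i : ℤ), mul_comm _ _⟩

private lemma geom_sum_prime_sub (r : ℕ) (hr : r.Prime) (q : ℤ)
    (h1 : (r : ℤ) ∣ q - 1) (h4 : r = 2 → 4 ∣ q - 1) :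
    ((r : ℤ) ^ 2) ∣ (∑ i ∈ range r, q ^ i) - r := by
  have key : (∑ i ∈ range r, q ^ i) - r
      = (∑ i ∈ range r, (q ^ i - (1 + i * (q - 1)))) + (q - 1) * (∑ i ∈ range r, (i : ℤ)) := by
    rw [Finset.mul_sum, ← Finset.sum_add_distrib]
    have : ∀ i ∈ range r, (q ^ i - (1 + i * (q - 1))) + (q - 1) * i = q ^ i - 1 := by
      intros; ring
    rw [Finset.sum_congr rfl this, Finset.sum_sub_distrib]
    simp
  rw [key]
  apply dvd_add
  · calc ((r:ℤ))^2 ∣ (q-1)^2 := pow_dvd_pow_of_dvd h1 2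
    _ ∣ _ := Finset.dvd_sum (fun i _ => binom_pow_sub q i)
  · have hsum2 : (∑ i ∈ range r, (i:ℤ)) * 2 = r * (r - 1) := by
      have h2 : (((∑ i ∈ range r, i) * 2 : ℕ) : ℤ) = ((r * (r-1) : ℕ) : ℤ) := by
        rw [Finset.sum_range_id_mul_two r]
      push_cast [Nat.cast_sub hr.one_le] at h2
      push_cast
      linarith
    rcases eq_or_ne r 2 with h2 | hne
    · subst h2
      have heq : (∑ i ∈ range 2, (i:ℤ)) = 1 := by decide
      rw [heq, mul_one]
      calc ((2:ℕ):ℤ)^2 = 4 := by norm_num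
        _ ∣ q - 1 := h4 rfl
    · have hodd : ¬ (2 ∣ r) := by
        intro h; exact hne ((Nat.prime_dvd_prime_iff_eq Nat.prime_two hr).mp h).symm
      have hcop : IsCoprime ((r:ℤ)) 2 := by
        rw [show (2:ℤ) = ((2:ℕ):ℤ) from rfl, Nat.isCoprime_iff_coprime]
        exact (Nat.coprime_comm.mp ((Nat.Prime.coprime_iff_not_dvd Nat.prime_two).mpr hodd))
      have hrdvd : (r : ℤ) ∣ ∑ i ∈ range r, (i:ℤ) := by
        apply hcop.dvd_of_dvd_mul_right
        rw [hsum2]; exact Dvd.intro _ rfl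
      obtain ⟨v, hv⟩ := hrdvd
      obtain ⟨w, hw⟩ := h1
      exact ⟨w * v, by rw [hv, hw]; ring⟩

private lemma prime_pow_dvd_geom_sum (r : ℕ) (hr : r.Prime) (a : ℕ) :
    ∀ (q : ℤ), (r : ℤ) ∣ q - 1 → (r = 2 → 2 ≤ a → 4 ∣ q - 1) →
      ∀ l : ℕ, (r : ℤ) ^ a ∣ ∑ i ∈ range l, q ^ i → r ^ a ∣ l := by
  induction a with
  | zero => intro q _ _ l _; simpa using Nat.one_dvd l
  | succ a ih =>
      intro q hq h4 l hdvd
      rcases Nat.eq_zero_or_pos l with rfl | hl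
      · exact dvd_zero _
      have hr1 : (r : ℤ) ∣ ∑ i ∈ range l, q ^ i :=
        dvd_trans (dvd_pow_self _ (Nat.succ_ne_zero a)) hdvd
      have hrl : r ∣ l := by
        have h2 : (r:ℤ) ∣ (∑ i ∈ range l, q ^ i) - l := hq.trans (sub_one_dvd_geom_sub q l)
        have h3 : (r : ℤ) ∣ (l : ℤ) := by
          have := dvd_sub hr1 h2
          rwa [sub_sub_cancel] at this
        exact_mod_cast h3
      rcases Nat.eq_zero_or_pos a with rfl | ha
      · simpa using hrl
      have h4' : r = 2 → 4 ∣ q - 1 := fun h2 => h4 h2 (by omega)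
      obtain ⟨l', rfl⟩ := hrl
      rw [sum_geom_mul q r l'] at hdvd
      obtain ⟨u, hu⟩ := geom_sum_prime_sub r hr q hq h4'
      have hrS : (r : ℤ) ∣ ∑ i ∈ range r, q ^ i := by
        have hS : (∑ i ∈ range r, q ^ i) = r + (r:ℤ)^2 * u := by linarith [hu]
        rw [hS]; exact ⟨1 + r * u, by ring⟩
      obtain ⟨v, hv⟩ := hrS
      have hr0 : (r:ℤ) ≠ 0 := by exact_mod_cast hr.pos.ne'
      have hnrv : ¬ (r : ℤ) ∣ v := by
        rintro ⟨w, hw⟩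
        rw [hv, hw] at hu
        have hcanc : (r:ℤ) * 1 = r * (r * w - r * u) := by ring_nf; ring_nf at hu; linarith
        have h1 := mul_left_cancel₀ hr0 hcanc
        have : (r : ℤ) ∣ 1 := ⟨w - u, by linarith [h1]⟩
        have := Int.le_of_dvd one_pos this
        have := hr.two_le
        omega
      have hstrip : (r : ℤ) ^ a ∣ ∑ i ∈ range l', (q ^ r) ^ i := by
        rw [hv] at hdvd
        have h2 : (r:ℤ) ^ a ∣ (∑ i ∈ range l', (q ^ r) ^ i) * v := by
          rcases hdvd with ⟨w, hw⟩
          refine ⟨w, mul_left_cancel₀ hr0 ?_⟩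
          rw [pow_succ] at hw
          linarith [hw]
        exact (Nat.prime_iff_prime_int.mp hr).pow_dvd_of_dvd_mul_right a hnrv h2
      have hdvd1 : (q - 1) ∣ q ^ r - 1 := by simpa using sub_dvd_pow_sub_pow q 1 r
      have hq' : (r : ℤ) ∣ q ^ r - 1 := hq.trans hdvd1
      have h4'' : r = 2 → 2 ≤ a → 4 ∣ q ^ r - 1 := fun h2 _ => (h4' h2).trans hdvd1
      have := ih (q ^ r) hq' h4'' l' hstrip
      rw [pow_succ']
      exact mul_dvd_mul_left r this

private lemma dvd_of_dvd_geom_sum (d : ℕ) (hd : 0 < d) (q : ℤ)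
    (hq : ∀ r : ℕ, r.Prime → r ∣ d → (r : ℤ) ∣ q - 1)
    (h4 : 4 ∣ d → (4:ℤ) ∣ q - 1) (l : ℕ)
    (h : (d : ℤ) ∣ ∑ i ∈ range l, q ^ i) : d ∣ l := by
  rcases Nat.eq_zero_or_pos l with rfl | hl
  · exact dvd_zero _
  rw [← Nat.factorization_le_iff_dvd hd.ne' hl.ne']
  rw [Finsupp.le_iff]
  intro r hrsup
  have hrmem : r ∈ d.primeFactors := by rwa [Nat.support_factorization] at hrsup
  have hrp : r.Prime := Nat.prime_of_mem_primeFactors hrmem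
  have hrd : r ∣ d := Nat.dvd_of_mem_primeFactors hrmem
  set a := d.factorization r with ha
  have hpd : r ^ a ∣ d := Nat.ordProj_dvd d r
  have hdvdS : (r : ℤ) ^ a ∣ ∑ i ∈ range l, q ^ i := by
    refine dvd_trans ?_ h
    exact_mod_cast Int.natCast_dvd_natCast.mpr hpd
  have h4' : r = 2 → 2 ≤ a → 4 ∣ q - 1 := by
    rintro rfl h2a
    apply h4
    calc (4:ℕ) = 2 ^ 2 := by norm_num
      _ ∣ 2 ^ a := pow_dvd_pow 2 h2a
      _ ∣ d := hpd
  have := prime_pow_dvd_geom_sum r hrp a q (hq r hrp hrd) h4' l hdvdS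
  exact (hrp.pow_dvd_iff_le_factorization hl.ne').mp this

private lemma surj_transfer (d r e q : ℕ) (hr0 : 0 < r) (hrd : r ∣ d)
    (hsurj : ∀ w : ZMod d, ∃ j : ℕ, ((e * ∑ i ∈ range j, q ^ i : ℕ) : ZMod d) = w) :
    ∀ w : ZMod r, ∃ j : ℕ, ((e * ∑ i ∈ range j, q ^ i : ℕ) : ZMod r) = w := by
  haveI : NeZero r := ⟨hr0.ne'⟩
  intro w
  obtain ⟨j, hj⟩ := hsurj ((w.val : ℕ) : ZMod d)
  refine ⟨j, ?_⟩
  have := congrArg (ZMod.castHom hrd (ZMod r)) hj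
  rwa [map_natCast, map_natCast, ZMod.natCast_val, ZMod.cast_id] at this

private lemma hd_surj (d q e : ℕ) (hd2 : 2 ≤ d) (hq2 : 2 ≤ q) (hcop : Nat.Coprime q d)
    (hg : Nat.gcd d e = 1)
    (hq1 : ∀ r : ℕ, r.Prime → r ∣ d → r ∣ q - 1) (h4 : 4 ∣ d → 4 ∣ q - 1) :
    ∀ w : ZMod d, ∃ j : ℕ, ((e * ∑ i ∈ range j, q ^ i : ℕ) : ZMod d) = w := by
  haveI : NeZero d := ⟨by omega⟩
  -- cast conditions to ℤ
  have hq1' : ∀ r : ℕ, r.Prime → r ∣ d → (r : ℤ) ∣ (q : ℤ) - 1 := by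
    intro r hr hrd
    have := hq1 r hr hrd
    have : ((r : ℤ)) ∣ ((q - 1 : ℕ) : ℤ) := Int.natCast_dvd_natCast.mpr this
    rwa [Nat.cast_sub (by omega), Nat.cast_one] at this
  have h4' : 4 ∣ d → (4:ℤ) ∣ (q : ℤ) - 1 := by
    intro hd4
    have := h4 hd4
    have : ((4:ℕ) : ℤ) ∣ ((q - 1 : ℕ) : ℤ) := Int.natCast_dvd_natCast.mpr this
    rwa [Nat.cast_sub (by omega), Nat.cast_one, Nat.cast_ofNat] at this
  set f : Fin d → ZMod d := fun j => ((e * ∑ i ∈ range j.val, q ^ i : ℕ) : ZMod d) with hf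
  have hinj : Function.Injective f := by
    have key : ∀ j k : Fin d, j ≤ k → f j = f k → j = k := by
      intro j k hjk hfe
      have hd0 : (0:ℕ) < d := by omega
      -- d ∣ e * (S k - S j) over ℤ
      have hdvd : (d : ℤ) ∣ (e * ∑ i ∈ range k.val, (q:ℤ) ^ i) - (e * ∑ i ∈ range j.val, (q:ℤ) ^ i) := by
        rw [← ZMod.intCast_zmod_eq_zero_iff_dvd]
        push_cast
        rw [sub_eq_zero]
        have h1 : ∀ l : ℕ, (((e * ∑ i ∈ range l, q ^ i : ℕ) : ZMod d)) = (e : ZMod d) * ∑ i ∈ range l, (q:ZMod d) ^ i := by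
          intro l; push_cast; ring
        have := hfe
        rw [hf] at this
        simp only [h1] at this
        push_cast at this ⊢
        exact this.symm
      obtain ⟨l, hl⟩ : ∃ l : ℕ, k.val = j.val + l := ⟨k.val - j.val, by omega⟩
      rw [hl, sum_geom_add] at hdvd
      have hdvd2 : (d : ℤ) ∣ (e : ℤ) * ((q:ℤ) ^ j.val * ∑ i ∈ range l, (q:ℤ) ^ i) := by
        have : (e:ℤ) * ((∑ i ∈ range j.val, (q:ℤ)^i) + (q:ℤ)^j.val * ∑ i ∈ range l, (q:ℤ)^i)
            - e * ∑ i ∈ range j.val, (q:ℤ) ^ i = e * ((q:ℤ)^j.val * ∑ i ∈ range l, (q:ℤ)^i) := by ring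
        rwa [this] at hdvd
      have hce : IsCoprime ((d:ℤ)) (e:ℤ) := Nat.isCoprime_iff_coprime.mpr hg
      have hcq : IsCoprime ((d:ℤ)) ((q:ℤ) ^ j.val) :=
        (Nat.isCoprime_iff_coprime.mpr (Nat.Coprime.symm hcop)).pow_right
      have h6 : (d:ℤ) ∣ (e:ℤ) * ((q:ℤ) ^ j.val * ∑ i ∈ range l, (q:ℤ) ^ i) := by
        exact hdvd2
      have hdS : (d : ℤ) ∣ ∑ i ∈ range l, (q:ℤ) ^ i :=
        hcq.dvd_of_dvd_mul_left (hce.dvd_of_dvd_mul_left h6)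
      have := dvd_of_dvd_geom_sum d hd0 q hq1' h4' l hdS
      have hlt : l < d := by omega
      have : l = 0 := by
        rcases Nat.eq_zero_or_pos l with h | h
        · exact h
        · exact absurd (Nat.le_of_dvd h this) (by omega)
      exact Fin.ext (by omega)
    intro j k hfe
    rcases le_total j k with h | h
    · exact key j k h hfe
    · exact (key k j h hfe.symm).symm
  have hbij : Function.Bijective f :=
    (Fintype.bijective_iff_injective_and_card f).mpr ⟨hinj, by simp [ZMod.card]⟩
  intro w
  obtain ⟨j, hj⟩ := hbij.surjective w
  exact ⟨j.val, hj⟩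

private lemma hd_nec_prime (d q e : ℕ) (hd2 : 2 ≤ d) (hq2 : 2 ≤ q) (hcop : Nat.Coprime q d)
    (hsurj : ∀ w : ZMod d, ∃ j : ℕ, ((e * ∑ i ∈ range j, q ^ i : ℕ) : ZMod d) = w)
    (r : ℕ) (hr : r.Prime) (hrd : r ∣ d) : r ∣ q - 1 := by
  by_contra hnd
  haveI : Fact r.Prime := ⟨hr⟩
  have hsurj' := surj_transfer d r e q hr.pos hrd hsurj
  set qb : ZMod r := (q : ZMod r) with hqb
  have hq1 : qb ≠ 1 := by
    intro h
    apply hnd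
    have : ((q : ℤ) - 1) % r = 0 := by
      have : ((q:ℤ) : ZMod r) - 1 = 0 := by push_cast; rw [← hqb, h]; ring
      have h2 : (((q:ℤ) - 1 : ℤ) : ZMod r) = 0 := by push_cast; push_cast at this; linear_combination this
      rwa [ZMod.intCast_zmod_eq_zero_iff_dvd, Int.dvd_iff_emod_eq_zero] at h2
    have h3 : (r:ℤ) ∣ (q:ℤ) - 1 := Int.dvd_of_emod_eq_zero this
    have h4 : (r:ℤ) ∣ ((q - 1 : ℕ) : ℤ) := by
      rwa [Nat.cast_sub (by omega), Nat.cast_one]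
    exact_mod_cast h4
  have hq0 : qb ≠ 0 := by
    intro h
    have : (r:ℕ) ∣ q := by
      have := (ZMod.natCast_eq_zero_iff q r).mp h
      exact this
    have : r ∣ Nat.gcd q d := Nat.dvd_gcd this hrd
    rw [hcop] at this
    have := Nat.le_of_dvd one_pos this
    have := hr.two_le
    omega
  set eb : ZMod r := (e : ZMod r) with heb
  have hXval : ∀ j : ℕ, ((e * ∑ i ∈ range j, q ^ i : ℕ) : ZMod r) = eb * ∑ i ∈ range j, qb ^ i := by
    intro j; push_cast; ring
  rcases eq_or_ne eb 0 with he0 | hene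
  · obtain ⟨j, hj⟩ := hsurj' 1
    rw [hXval, he0, zero_mul] at hj
    exact one_ne_zero hj.symm
  · set c : ZMod r := eb * (1 - qb)⁻¹ with hc
    have hcne : c ≠ 0 := by
      apply mul_ne_zero hene
      apply inv_ne_zero
      intro h
      apply hq1
      have : (1:ZMod r) - qb = 0 := h
      linear_combination -this
    have hform : ∀ j : ℕ, eb * ∑ i ∈ range j, qb ^ i = c * (1 - qb ^ j) := by
      intro j
      induction j with
      | zero => simp
      | succ j ih =>
          have hkey : c * (1 - qb) = eb := by
            rw [hc, mul_assoc, inv_mul_cancel₀ (by intro h; apply hq1; linear_combination -h), mul_one]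
          rw [geom_sum_succ]
          linear_combination qb * ih - hkey
    obtain ⟨j, hj⟩ := hsurj' c
    rw [hXval, hform] at hj
    have : c * qb ^ j = 0 := by linear_combination -hj
    rcases mul_eq_zero.mp this with h | h
    · exact hcne h
    · exact hq0 (pow_eq_zero_iff'.mp h).1

private lemma hd_nec_four (d q e : ℕ) (hq2 : 2 ≤ q)
    (hsurj : ∀ w : ZMod d, ∃ j : ℕ, ((e * ∑ i ∈ range j, q ^ i : ℕ) : ZMod d) = w)
    (hd4 : 4 ∣ d) (h2q : 2 ∣ q - 1) : 4 ∣ q - 1 := by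
  by_contra hn4
  have hq34 : q % 4 = 3 := by omega
  have hsurj' := surj_transfer d 4 e q (by norm_num) hd4 hsurj
  have hqb : (q : ZMod 4) = 3 := by
    have h := (ZMod.natCast_mod q 4)
    rw [hq34] at h
    rw [← h]; rfl
  set eb : ZMod 4 := (e : ZMod 4) with heb
  have hXval : ∀ j : ℕ, ((e * ∑ i ∈ range j, q ^ i : ℕ) : ZMod 4) = eb * ∑ i ∈ range j, (q : ZMod 4) ^ i := by
    intro j; push_cast; ring
  have step : ∀ j : ℕ, eb * ∑ i ∈ range (j+1), (q : ZMod 4) ^ i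
      = 3 * (eb * ∑ i ∈ range j, (q : ZMod 4) ^ i) + eb := by
    intro j
    rw [geom_sum_succ, hqb]; ring
  have hcases : ∀ j : ℕ, ((e * ∑ i ∈ range j, q ^ i : ℕ) : ZMod 4) = 0
      ∨ ((e * ∑ i ∈ range j, q ^ i : ℕ) : ZMod 4) = eb := by
    intro j
    induction j with
    | zero => left; simp
    | succ j ih =>
        rw [hXval] at ih ⊢
        rw [step j]
        rcases ih with h | h
        · right; rw [h]; ring
        · left; rw [h]
          have h4 : (3 : ZMod 4) * eb + eb = 4 * eb := by ring
          rw [h4]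
          have : (4 : ZMod 4) = 0 := rfl
          rw [this, zero_mul]
  obtain ⟨j1, hj1⟩ := hsurj' 1
  obtain ⟨j2, hj2⟩ := hsurj' 2
  have he1 : eb = 1 := by
    rcases hcases j1 with h | h
    · rw [hj1] at h; exact absurd h (by decide)
    · rw [hj1] at h; exact h.symm
  have he2 : eb = 2 := by
    rcases hcases j2 with h | h
    · rw [hj2] at h; exact absurd h (by decide)
    · rw [hj2] at h; exact h.symm
  rw [he1] at he2
  exact absurd he2 (by decide)

private lemma hull_dobell (d q e : ℕ) (hd2 : 2 ≤ d) (hq2 : 2 ≤ q) (hcop : Nat.Coprime q d) :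
    (∀ w : ZMod d, ∃ j : ℕ, ((e * ∑ i ∈ range j, q ^ i : ℕ) : ZMod d) = w)
      ↔ (Nat.gcd d e = 1 ∧ (∀ r : ℕ, r.Prime → r ∣ d → r ∣ q - 1) ∧ (4 ∣ d → 4 ∣ q - 1)) := by
  constructor
  · intro hsurj
    refine ⟨?_, fun r hr hrd => hd_nec_prime d q e hd2 hq2 hcop hsurj r hr hrd, fun hd4 => ?_⟩
    · -- gcd
      obtain ⟨j, hj⟩ := hsurj 1
      haveI : NeZero d := ⟨by omega⟩
      have hz : (d:ℤ) ∣ ((e * ∑ i ∈ range j, q ^ i : ℕ) : ℤ) - 1 := by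
        rw [← ZMod.intCast_zmod_eq_zero_iff_dvd]
        push_cast
        rw [sub_eq_zero]
        exact_mod_cast hj
      have hg : (Nat.gcd d e : ℤ) ∣ 1 := by
        have h1 : (Nat.gcd d e : ℤ) ∣ ((e * ∑ i ∈ range j, q ^ i : ℕ) : ℤ) := by
          exact_mod_cast Int.natCast_dvd_natCast.mpr
            (dvd_mul_of_dvd_left (Nat.gcd_dvd_right d e) _)
        have h2 : (Nat.gcd d e : ℤ) ∣ ((e * ∑ i ∈ range j, q ^ i : ℕ) : ℤ) - 1 :=
          dvd_trans (Int.natCast_dvd_natCast.mpr (Nat.gcd_dvd_left d e)) hz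
        have := dvd_sub h1 h2
        simpa using this
      exact Nat.dvd_one.mp (by exact_mod_cast hg)
    · have h2q : 2 ∣ q - 1 :=
        hd_nec_prime d q e hd2 hq2 hcop hsurj 2 Nat.prime_two (dvd_trans ⟨2, rfl⟩ hd4)
      exact hd_nec_four d q e hq2 hsurj hd4 h2q
  · rintro ⟨hg, hq1, h4⟩
    exact hd_surj d q e hd2 hq2 hcop hg hq1 h4


/-- Characterization of transitivity (on nonzero field elements) of the subgroup of
`ΓL₁(p^m)` with standard parameters `(d, e, s)`, where `d ≥ 2`: the subgroup generated by
`x ↦ ω^e · x^{p^s}` and `x ↦ ω^d · x` is transitive on `F \ {0}` if and only if `e > 0`,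
`gcd(d, e) = 1`, every prime divisor of `d` divides `p^s - 1`, and `4 ∣ d → 4 ∣ p^s - 1`. -/
theorem gammaL_one_subgroup_transitive_iff
    (p m : ℕ) (hp : p.Prime) (hm : 0 < m) (F : Type*) [Field F] [Fintype F]
    (hF : Fintype.card F = p ^ m) (ω : Fˣ) (hω : ∀ x : Fˣ, x ∈ Subgroup.zpowers ω)
    (d e s : ℕ) (hd2 : 2 ≤ d) (hddvd : d ∣ p ^ m - 1) (hs1 : 1 ≤ s) (hsm : s ∣ m)
    (he : e ≤ d - 1) (hde : d ∣ e * ((p ^ m - 1) / (p ^ s - 1)))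
    (A : Subgroup (Equiv.Perm F))
    (hA : A = Subgroup.closure {g : Equiv.Perm F |
        (∀ x : F, g x = (ω : F) ^ e * x ^ p ^ s) ∨ (∀ x : F, g x = (ω : F) ^ d * x)}) :
    (∀ x y : F, x ≠ 0 → y ≠ 0 → ∃ g ∈ A, g x = y) ↔
      (0 < e ∧ Nat.gcd d e = 1 ∧ (∀ q : ℕ, q.Prime → q ∣ d → q ∣ p ^ s - 1) ∧
        (4 ∣ d → 4 ∣ p ^ s - 1)) := by
  subst hA
  haveI : NeZero d := ⟨by omega⟩
  set q : ℕ := p ^ s with hqdef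
  set n : ℕ := p ^ m - 1 with hndef
  set sn : ℕ → ℕ := fun j => ∑ i ∈ range j, q ^ i with hsn
  have hq2 : 2 ≤ q := by
    calc 2 = 2 ^ 1 := by norm_num
    _ ≤ p ^ s := Nat.pow_le_pow_left hp.two_le s |>.trans' (by
        exact Nat.pow_le_pow_right (by norm_num) hs1)
  have hpm2 : 2 ≤ p ^ m := by
    calc 2 = 2 ^ 1 := by norm_num
    _ ≤ p ^ m := Nat.pow_le_pow_left hp.two_le m |>.trans' (by
        exact Nat.pow_le_pow_right (by norm_num) hm)
  have hn1 : 1 ≤ n := by omega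
  set t : ℕ := m / s with htdef
  have hst : s * t = m := Nat.mul_div_cancel' hsm
  have ht1 : 1 ≤ t := by
    rcases Nat.eq_zero_or_pos t with h | h
    · rw [h, mul_zero] at hst; omega
    · exact h
  have hqt : q ^ t = p ^ m := by rw [hqdef, ← pow_mul, hst]
  have hxqt : ∀ x : F, x ^ q ^ t = x := by
    intro x
    rw [hqt, ← hF]
    exact FiniteField.pow_card x
  -- coprimality
  have hpd : ¬ p ∣ d := by
    intro hpd'
    have h1 : p ∣ p ^ m - 1 := hpd'.trans hddvd
    have h2 : p ∣ p ^ m := dvd_pow_self p (by omega)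
    have h3 := Nat.dvd_sub h2 h1
    rw [show p ^ m - (p ^ m - 1) = 1 by omega] at h3
    have := Nat.le_of_dvd one_pos h3
    have := hp.two_le
    omega
  have hcop : Nat.Coprime q d :=
    Nat.Coprime.pow_left s ((Nat.Prime.coprime_iff_not_dvd hp).mpr hpd)
  -- order of ω
  haveI := Classical.decEq F
  have hord : orderOf ω = n := by
    rw [orderOf_eq_card_of_forall_mem_zpowers hω, Nat.card_eq_fintype_card,
      Fintype.card_units, hF]
  -- injectivity of x ↦ x^q
  have hinjq : ∀ x y : F, x ^ q = y ^ q → x = y := by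
    intro x y hxy
    have h1 : q ^ t = q * q ^ (t - 1) := by
      rw [← pow_succ']
      congr 1
      omega
    calc x = x ^ q ^ t := (hxqt x).symm
      _ = (x ^ q) ^ q ^ (t-1) := by rw [h1, pow_mul]
      _ = (y ^ q) ^ q ^ (t-1) := by rw [hxy]
      _ = y ^ q ^ t := by rw [h1, pow_mul]
      _ = y := hxqt y
  have hωF : (ω : F) ≠ 0 := Units.ne_zero ω
  -- the generators
  set fτ : F → F := fun x => (ω : F) ^ e * x ^ q with hfτ
  have hinjτ : Function.Injective fτ := by
    intro x y hxy
    exact hinjq x y (mul_left_cancel₀ (pow_ne_zero e hωF) hxy)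
  set τ : Equiv.Perm F := Equiv.ofBijective fτ (Finite.injective_iff_bijective.mp hinjτ)
    with hτdef
  have hτ : ∀ x : F, τ x = (ω : F) ^ e * x ^ q := fun x => rfl
  set fμ : F → F := fun x => (ω : F) ^ d * x with hfμ
  have hinjμ : Function.Injective fμ := fun x y hxy =>
    mul_left_cancel₀ (pow_ne_zero d hωF) hxy
  set μ : Equiv.Perm F := Equiv.ofBijective fμ (Finite.injective_iff_bijective.mp hinjμ)
    with hμdef
  have hμ : ∀ x : F, μ x = (ω : F) ^ d * x := fun x => rfl
  set K : Set (Equiv.Perm F) := {g : Equiv.Perm F |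
        (∀ x : F, g x = (ω : F) ^ e * x ^ p ^ s) ∨ (∀ x : F, g x = (ω : F) ^ d * x)}
    with hK
  have hτA : τ ∈ Subgroup.closure K := Subgroup.subset_closure (Or.inl fun x => rfl)
  have hμA : μ ∈ Subgroup.closure K := Subgroup.subset_closure (Or.inr fun x => rfl)
  -- power formulas
  have hτpow : ∀ (j : ℕ) (x : F), (τ ^ j) x = (ω : F) ^ (e * sn j) * x ^ q ^ j := by
    intro j
    induction j with
    | zero => intro x; simp [hsn]
    | succ j ih =>
        intro x
        rw [pow_succ, Equiv.Perm.mul_apply, ih (τ x), hτ x]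
        have hsucc : sn (j + 1) = sn j + q ^ j := by simp [hsn, Finset.sum_range_succ]
        rw [hsucc, Nat.mul_add, pow_add, mul_pow, ← pow_mul, ← pow_mul, pow_succ']
        ring
  have hμpow : ∀ (k : ℕ) (x : F), (μ ^ k) x = (ω : F) ^ (d * k) * x := by
    intro k
    induction k with
    | zero => intro x; simp
    | succ k ih =>
        intro x
        rw [pow_succ, Equiv.Perm.mul_apply, ih (μ x), hμ x, Nat.mul_add, pow_add]
        ring
  -- the invariant
  set P : Equiv.Perm F → Prop := fun g => ∃ c j : ℕ,
    (∀ x : F, g x = (ω : F) ^ c * x ^ q ^ j) ∧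
      ((c : ZMod d) = ((e * sn j : ℕ) : ZMod d)) with hP
  have pone : P 1 := by
    refine ⟨0, 0, fun x => by simp, by simp [hsn]⟩
  have pmul : ∀ g h : Equiv.Perm F, P g → P h → P (g * h) := by
    rintro g h ⟨c1, j1, hg1, hg2⟩ ⟨c2, j2, hh1, hh2⟩
    refine ⟨c1 + c2 * q ^ j1, j1 + j2, fun x => ?_, ?_⟩
    · rw [Equiv.Perm.mul_apply, hh1 x, hg1, mul_pow, ← pow_mul, ← pow_mul, pow_add,
        pow_add]
      ring
    · have hL : ((c1 + c2 * q ^ j1 : ℕ) : ZMod d)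
          = (c1 : ZMod d) + (c2 : ZMod d) * ((q : ℕ) : ZMod d) ^ j1 := by
        push_cast; ring
      have hR : ((e * sn (j1 + j2) : ℕ) : ZMod d)
          = ((e * sn j1 : ℕ) : ZMod d) + ((q : ℕ) : ZMod d) ^ j1 * ((e * sn j2 : ℕ) : ZMod d) := by
        have : sn (j1 + j2) = sn j1 + q ^ j1 * sn j2 := by
          simp only [hsn]; exact sum_geom_add q j1 j2
        rw [this]
        push_cast; ring
      rw [hL, hR, hg2, hh2]; ring
  have ppow : ∀ (g : Equiv.Perm F), P g → ∀ k : ℕ, P (g ^ k) := by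
    intro g hg k
    induction k with
    | zero => simpa using pone
    | succ k ih => rw [pow_succ]; exact pmul _ _ ih hg
  have key : ∀ g ∈ Subgroup.closure K, P g := by
    intro g hg
    refine Subgroup.closure_induction ?_ pone (fun x y _ _ hx hy => pmul x y hx hy)
      (fun x _ hx => ?_) hg
    · rintro x (hx | hx)
      · exact ⟨e, 1, fun y => by rw [hx y, pow_one], by simp [hsn]⟩
      · exact ⟨d, 0, fun y => by rw [hx y, pow_zero, pow_one],
          by simp [hsn, ZMod.natCast_self]⟩
    · have hN : 0 < orderOf x := orderOf_pos x
      have hinv : x⁻¹ = x ^ (orderOf x - 1) := by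
        symm
        apply eq_inv_of_mul_eq_one_left
        rw [← pow_succ]
        rw [show orderOf x - 1 + 1 = orderOf x by omega]
        exact pow_orderOf_eq_one x
      rw [hinv]
      exact ppow x hx _
  -- Step 2 : transitivity on 1 ↔ surjectivity mod d
  have step2 : (∀ y : F, y ≠ 0 → ∃ g ∈ Subgroup.closure K, g 1 = y)
      ↔ (∀ w : ZMod d, ∃ j : ℕ, ((e * sn j : ℕ) : ZMod d) = w) := by
    constructor
    · intro h w
      obtain ⟨g, hgA, hg1⟩ := h ((ω : F) ^ w.val) (pow_ne_zero _ hωF)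
      obtain ⟨c, j, hform, hcast⟩ := key g hgA
      have hωc : (ω : F) ^ c = (ω : F) ^ w.val := by
        rw [← hg1, hform 1, one_pow, mul_one]
      have hu : ω ^ c = ω ^ w.val := Units.ext (by
        rw [Units.val_pow_eq_pow_val, Units.val_pow_eq_pow_val]; exact hωc)
      have hmod : c ≡ w.val [MOD n] := by
        rw [← hord]; exact pow_eq_pow_iff_modEq.mp hu
      have hmodd : c ≡ w.val [MOD d] := hmod.of_dvd hddvd
      refine ⟨j, ?_⟩
      rw [← hcast]
      have h1 : ((c : ℕ) : ZMod d) = ((w.val : ℕ) : ZMod d) :=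
        (ZMod.natCast_eq_natCast_iff _ _ _).mpr hmodd
      rw [h1]
      exact ZMod.natCast_rightInverse w
    · intro hsurj y hy
      set u : Fˣ := Units.mk0 y hy with hu
      obtain ⟨k, hk⟩ := Subgroup.mem_zpowers_iff.mp (hω u)
      set E : ℕ := (k % (n : ℤ)).toNat with hE
      have hEk : (E : ℤ) = k % (n : ℤ) :=
        Int.toNat_of_nonneg (Int.emod_nonneg k (by exact_mod_cast (by omega : n ≠ 0)))
      have hωE : ω ^ E = u := by
        rw [← hk]
        have : ω ^ (E : ℤ) = ω ^ k := by
          rw [zpow_eq_zpow_iff_modEq, hord, hEk]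
          exact Int.emod_emod_of_dvd k dvd_rfl
        rwa [zpow_natCast] at this
      obtain ⟨j, hj⟩ := hsurj ((E : ℕ) : ZMod d)
      have hmodd : (e * sn j) ≡ E [MOD d] := (ZMod.natCast_eq_natCast_iff _ _ _).mp hj
      obtain ⟨Kk, hKk⟩ := Nat.ModEq.dvd hmodd
      set k2 : ℕ := (Kk % (n : ℤ)).toNat with hk2
      have hk2K : (k2 : ℤ) % (n : ℤ) = Kk % (n : ℤ) := by
        rw [hk2, Int.toNat_of_nonneg (Int.emod_nonneg Kk (by exact_mod_cast (by omega : n ≠ 0)))]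
        exact Int.emod_emod_of_dvd Kk dvd_rfl
      refine ⟨μ ^ k2 * τ ^ j, mul_mem (pow_mem hμA k2) (pow_mem hτA j), ?_⟩
      rw [Equiv.Perm.mul_apply, hτpow j 1, one_pow, mul_one, hμpow k2]
      rw [← pow_add]
      have hunit : ω ^ (d * k2 + e * sn j) = u := by
        rw [← hωE]
        have h5 : ω ^ ((d * k2 + e * sn j : ℕ) : ℤ) = ω ^ ((E : ℕ) : ℤ) := by
          rw [zpow_eq_zpow_iff_modEq, hord]
          have h2 : ((d * k2 + e * sn j : ℕ) : ℤ) - (E : ℤ) = (d : ℤ) * ((k2 : ℤ) - Kk) := by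
            push_cast
            push_cast at hKk
            linarith [hKk]
          have h3 : (n : ℤ) ∣ ((d * k2 + e * sn j : ℕ) : ℤ) - (E : ℤ) := by
            rw [h2]
            have h4 : (n : ℤ) ∣ (Kk : ℤ) - (k2 : ℤ) := Int.ModEq.dvd hk2K
            have h4' : (n : ℤ) ∣ (k2 : ℤ) - Kk := by
              have := dvd_neg.mpr h4
              rwa [neg_sub] at this
            exact Dvd.dvd.mul_left h4' (d : ℤ)
          rw [Int.modEq_iff_dvd]
          have := dvd_neg.mpr h3
          rwa [neg_sub] at this
        rw [zpow_natCast, zpow_natCast] at h5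
        exact h5
      calc (ω : F) ^ (d * k2 + e * sn j)
          = ((ω ^ (d * k2 + e * sn j) : Fˣ) : F) := by rw [Units.val_pow_eq_pow_val]
        _ = (u : F) := by rw [hunit]
        _ = y := rfl
  constructor
  · intro htrans
    have h1 := step2.mp (fun y hy => htrans 1 y one_ne_zero hy)
    obtain ⟨hg, hq1, h4⟩ := (hull_dobell d q e hd2 hq2 hcop).mp h1
    have he0 : 0 < e := by
      rcases Nat.eq_zero_or_pos e with rfl | h
      · rw [Nat.gcd_zero_right] at hg; omega
      · exact h
    exact ⟨he0, hg, hq1, h4⟩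
  · rintro ⟨he0, hg, hq1, h4⟩
    have hsurj := (hull_dobell d q e hd2 hq2 hcop).mpr ⟨hg, hq1, h4⟩
    have h1trans := step2.mpr hsurj
    intro x y hx hy
    obtain ⟨gx, hgxA, hgx⟩ := h1trans x hx
    obtain ⟨gy, hgyA, hgy⟩ := h1trans y hy
    refine ⟨gy * gx⁻¹, mul_mem hgyA (inv_mem hgxA), ?_⟩
    rw [Equiv.Perm.mul_apply, ← hgx, (by exact Equiv.symm_apply_apply gx 1 : gx⁻¹ (gx 1) = 1), hgy]
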